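/- Let n1, n2, n3 ≥ 2 and let u = (x1,x2,0) and v = (y1,y2,n3−1) be two vertices of the 3D grid P_{n1}□P_{n2}□P_{n3}. Then at least n3(n1+n2−2) vertices of F(n1,n2,n3) resolve u and v. -/

import Mathlib

/-- Vertices of the 3D grid `P_{n1} □ P_{n2} □ P_{n3}`. -/
abbrev GridV (n1 n2 n3 : ℕ) := Fin n1 × Fin n2 × Fin n3

/-- Graph distance in the 3D grid: the ℓ₁ (Manhattan) distance. -/
def gridDist {n1 n2 n3 : ℕ} (u v : GridV n1 n2 n3) : ℕ :=
  ((u.1 : ℤ) - (v.1 : ℤ)).natAbs + ((u.2.1 : ℤ) - (v.2.1 : ℤ)).natAbs +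
    ((u.2.2 : ℤ) - (v.2.2 : ℤ)).natAbs

/-- A vertex `w` resolves the pair `u`, `v`. -/
abbrev gridResolves {n1 n2 n3 : ℕ} (w u v : GridV n1 n2 n3) : Prop :=
  gridDist w u ≠ gridDist w v

/-- `S` is a resolving set for the 3D grid. -/
def IsResolvingSet {n1 n2 n3 : ℕ} (S : Set (GridV n1 n2 n3)) : Prop :=
  ∀ u v : GridV n1 n2 n3, u ≠ v → ∃ w ∈ S, gridResolves w u v

/-- `S` is an `m`-resolving set: each pair of distinct vertices is resolved by
at least `m` vertices of `S`. -/
def IsKResolvingSet {n1 n2 n3 : ℕ} (m : ℕ) (S : Finset (GridV n1 n2 n3)) : Prop :=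
  ∀ u v : GridV n1 n2 n3, u ≠ v →
    m ≤ (S.filter (fun w => gridResolves w u v)).card

/-- The metric dimension of the 3D grid. -/
noncomputable def gridMetricDim (n1 n2 n3 : ℕ) : ℕ :=
  sInf { m | ∃ S : Finset (GridV n1 n2 n3),
    IsResolvingSet (S : Set (GridV n1 n2 n3)) ∧ S.card = m }

/-- The `m`-metric dimension of the 3D grid. -/
noncomputable def gridKMetricDim (m n1 n2 n3 : ℕ) : ℕ :=
  sInf { c | ∃ S : Finset (GridV n1 n2 n3), IsKResolvingSet m S ∧ S.card = c }

/-- `F(n1,n2,n3)`: the boundary vertices of the grid. -/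
def gridBoundary (n1 n2 n3 : ℕ) : Finset (GridV n1 n2 n3) :=
  Finset.univ.filter (fun z =>
    z.1.val = 0 ∨ z.1.val = n1 - 1 ∨ z.2.1.val = 0 ∨ z.2.1.val = n2 - 1 ∨
    z.2.2.val = 0 ∨ z.2.2.val = n3 - 1)

/-- `α_M(n1,n2,n3) = min{n1(n2+n3−2), n2(n1+n3−2), n3(n1+n2−2)}`. -/
def alphaM (n1 n2 n3 : ℕ) : ℕ :=
  min (n1 * (n2 + n3 - 2)) (min (n2 * (n1 + n3 - 2)) (n3 * (n1 + n2 - 2)))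

/-- `α_m(n1,n2,n3) = 2(n1+n2+n3) − 8`. -/
def alpham (n1 n2 n3 : ℕ) : ℕ := 2 * (n1 + n2 + n3) - 8

/-- If `u = (x1,x2,0)` and `v = (y1,y2,n3-1)`, then at least `n3*(n1+n2-2)` boundary
vertices resolve `u` and `v`. -/

lemma line_card (n : ℕ) (hn : 2 ≤ n) :
    (Finset.univ.filter (fun i : Fin n => i.val ≠ 0 ∧ i.val ≠ n - 1)).card = n - 2 := by
  have h := Finset.card_filter_add_card_filter_not
    (s := (Finset.univ : Finset (Fin n))) (p := fun i : Fin n => i.val ≠ 0 ∧ i.val ≠ n - 1)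
  have h2 : (Finset.univ.filter (fun i : Fin n => ¬(i.val ≠ 0 ∧ i.val ≠ n - 1))).card = 2 := by
    have he : (Finset.univ.filter (fun i : Fin n => ¬(i.val ≠ 0 ∧ i.val ≠ n - 1)))
        = {(⟨0, by omega⟩ : Fin n), ⟨n - 1, by omega⟩} := by
      ext i
      simp [Fin.ext_iff]
      tauto
    rw [he, Finset.card_insert_of_notMem, Finset.card_singleton]
    simp [Fin.ext_iff]
    omega
  simp only [Finset.card_univ, Fintype.card_fin] at h
  omega


theorem grid3D_resolving_count_opposite_layers (n1 n2 n3 : ℕ)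
    (h1 : 2 ≤ n1) (h2 : 2 ≤ n2) (h3 : 2 ≤ n3)
    (u v : GridV n1 n2 n3)
    (hu : u.2.2.val = 0) (hv : v.2.2.val = n3 - 1) :
    n3 * (n1 + n2 - 2) ≤
      ((gridBoundary n1 n2 n3).filter (fun w => gridResolves w u v)).card := by

  classical
  set B := gridBoundary n1 n2 n3 with hB
  -- card of the boundary
  have hint : (Finset.univ.filter (fun z : GridV n1 n2 n3 =>
      ¬(z.1.val = 0 ∨ z.1.val = n1 - 1 ∨ z.2.1.val = 0 ∨ z.2.1.val = n2 - 1 ∨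
        z.2.2.val = 0 ∨ z.2.2.val = n3 - 1))).card = (n1 - 2) * ((n2 - 2) * (n3 - 2)) := by
    have he : (Finset.univ.filter (fun z : GridV n1 n2 n3 =>
        ¬(z.1.val = 0 ∨ z.1.val = n1 - 1 ∨ z.2.1.val = 0 ∨ z.2.1.val = n2 - 1 ∨
          z.2.2.val = 0 ∨ z.2.2.val = n3 - 1)))
        = Finset.univ.filter (fun z : GridV n1 n2 n3 =>
            (z.1.val ≠ 0 ∧ z.1.val ≠ n1 - 1) ∧
            ((fun y : Fin n2 × Fin n3 => (y.1.val ≠ 0 ∧ y.1.val ≠ n2 - 1) ∧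
              (y.2.val ≠ 0 ∧ y.2.val ≠ n3 - 1)) z.2)) := by
      apply Finset.filter_congr
      intro z _
      simp only [eq_iff_iff]
      tauto
    rw [he, ← Finset.univ_product_univ,
      Finset.filter_product (fun a : Fin n1 => a.val ≠ 0 ∧ a.val ≠ n1 - 1)
        (fun y : Fin n2 × Fin n3 => (y.1.val ≠ 0 ∧ y.1.val ≠ n2 - 1) ∧
          (y.2.val ≠ 0 ∧ y.2.val ≠ n3 - 1)),
      Finset.card_product, ← Finset.univ_product_univ,
      Finset.filter_product (fun a : Fin n2 => a.val ≠ 0 ∧ a.val ≠ n2 - 1)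
        (fun a : Fin n3 => a.val ≠ 0 ∧ a.val ≠ n3 - 1),
      Finset.card_product, line_card n1 h1, line_card n2 h2, line_card n3 h3]
  have hBcard : B.card + (n1 - 2) * ((n2 - 2) * (n3 - 2)) = n1 * (n2 * n3) := by
    have h := Finset.card_filter_add_card_filter_not
      (s := (Finset.univ : Finset (GridV n1 n2 n3)))
      (p := fun z : GridV n1 n2 n3 =>
        z.1.val = 0 ∨ z.1.val = n1 - 1 ∨ z.2.1.val = 0 ∨ z.2.1.val = n2 - 1 ∨
        z.2.2.val = 0 ∨ z.2.2.val = n3 - 1)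
    rw [hint] at h
    simpa [hB, gridBoundary, Finset.card_univ] using h
  -- bad vertices inject into Fin n1 × Fin n2
  have hbad : (B.filter (fun w => ¬ gridResolves w u v)).card ≤ n1 * n2 := by
    have := Finset.card_le_card_of_injOn
      (s := B.filter (fun w => ¬ gridResolves w u v))
      (t := (Finset.univ : Finset (Fin n1 × Fin n2)))
      (fun w => (w.1, w.2.1)) (fun a _ => Finset.mem_univ _) ?_
    · simpa [Finset.card_univ] using this
    · intro w1 hw1 w2 hw2 heq
      simp only [Finset.coe_filter, Set.mem_setOf_eq, Finset.mem_filter] at hw1 hw2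
      simp only [Prod.mk.injEq] at heq
      obtain ⟨e1, e2⟩ := heq
      have d1 := hw1.2
      have d2 := hw2.2
      simp only [gridResolves, not_not, gridDist] at d1 d2
      rw [e1, e2] at d1
      have hc1 : w1.2.2.val < n3 := w1.2.2.isLt
      have hc2 : w2.2.2.val < n3 := w2.2.2.isLt
      have : w1.2.2 = w2.2.2 := by
        apply Fin.ext
        omega
      exact Prod.ext e1 (Prod.ext e2 this)
  -- combine
  have hsplit := Finset.card_filter_add_card_filter_not
    (s := B) (p := fun w => gridResolves w u v)
  -- arithmetic
  obtain ⟨a, ha⟩ : ∃ a, n1 = a + 2 := ⟨n1 - 2, by omega⟩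
  obtain ⟨b, hb⟩ : ∃ b, n2 = b + 2 := ⟨n2 - 2, by omega⟩
  obtain ⟨c, hc⟩ : ∃ c, n3 = c + 2 := ⟨n3 - 2, by omega⟩
  subst ha hb hc
  have harith : (c + 2) * (a + b + 2) + (a + 2) * (b + 2) + a * (b * c)
      ≤ (a + 2) * ((b + 2) * (c + 2)) := by nlinarith
  have hred : (a + 2) + (b + 2) - 2 = a + b + 2 := by omega
  rw [hred]
  simp only [Nat.add_sub_cancel] at hBcard
  omega
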